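/- arXiv:2211.01758 — 3 statements merged into one kernel-verified Lean document; each statement's English description precedes it below -/
import Mathlib

section
/- Let f be a convex function on a closed convex set X ⊆ ℝ^d, and ν a continuously differentiable convex function. If u* = argmin_{u ∈ X} { f(u) + D^ν(u, y) }, where D^ν(x,y) = ν(x) - ν(y) - ⟨∇ν(y), x - y⟩ is the Bregman divergence of ν, then for all u ∈ X: f(u*) + D^ν(u*, y) + D^f(u, u*) ≤ f(u) + D^ν(u, y) - D^ν(u, u*). -/
open scoped RealInnerProductSpace

/-- Proximal lemma (Lemma 2.4): if `ustar` minimizes `f + D^ν(·, y)` over a closed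
convex set `X`, then there is a subgradient `g` of `f` at `ustar` such that for all `u ∈ X`,
`f(ustar) + D^ν(ustar, y) + D^f(u, ustar) ≤ f(u) + D^ν(u, y) - D^ν(u, ustar)`. -/
theorem stmt0 {d : ℕ} (X : Set (EuclideanSpace ℝ (Fin d)))
    (hXc : IsClosed X) (hXconv : Convex ℝ X)
    (f ν : EuclideanSpace ℝ (Fin d) → ℝ)
    (ν' : EuclideanSpace ℝ (Fin d) → EuclideanSpace ℝ (Fin d))
    (hf : ConvexOn ℝ X f)
    (hν : ∀ x, HasGradientAt ν (ν' x) x)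
    (hν'cont : Continuous ν')
    (hνconv : ConvexOn ℝ Set.univ ν)
    (y ustar : EuclideanSpace ℝ (Fin d))
    (hy : y ∈ X) (hustar : ustar ∈ X)
    (hmin : ∀ u ∈ X,
      f ustar + (ν ustar - ν y - ⟪ν' y, ustar - y⟫)
        ≤ f u + (ν u - ν y - ⟪ν' y, u - y⟫)) :
    ∃ g : EuclideanSpace ℝ (Fin d),
      (∀ z ∈ X, f ustar + ⟪g, z - ustar⟫ ≤ f z) ∧
      ∀ u ∈ X,
        f ustar + (ν ustar - ν y - ⟪ν' y, ustar - y⟫)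
            + (f u - f ustar - ⟪g, u - ustar⟫)
          ≤ f u + (ν u - ν y - ⟪ν' y, u - y⟫)
            - (ν u - ν ustar - ⟪ν' ustar, u - ustar⟫) := by
  refine ⟨ν' y - ν' ustar, ?_, ?_⟩
  · intro z hz
    set v := z - ustar with hv
    -- derivative along the line
    have hcurve : HasDerivAt (fun t : ℝ => ustar + t • v) v 0 := by
      simpa using ((hasDerivAt_id (0:ℝ)).smul_const v).const_add ustar
    have hline : HasDerivAt (fun t : ℝ => ν (ustar + t • v)) ⟪ν' ustar, v⟫ 0 := by
      have hF : HasFDerivAt ν ((InnerProductSpace.toDual ℝ _) (ν' ustar))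
          (ustar + (0:ℝ) • v) := by simpa using (hν ustar).hasFDerivAt
      have := hF.comp_hasDerivAt 0 hcurve
      simp at this; exact this
    have hslope := hasDerivAt_iff_tendsto_slope.mp hline
    have hslope' : Filter.Tendsto (slope (fun t : ℝ => ν (ustar + t • v)) 0)
        (nhdsWithin 0 (Set.Ioi 0)) (nhds ⟪ν' ustar, v⟫) :=
      hslope.mono_left (nhdsWithin_mono _ (fun t ht => ne_of_gt ht))
    have hev : ∀ᶠ t in nhdsWithin (0:ℝ) (Set.Ioi 0),
        f ustar - f z + ⟪ν' y, v⟫ ≤ slope (fun t : ℝ => ν (ustar + t • v)) 0 t := by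
      filter_upwards [Ioc_mem_nhdsGT_of_mem (by norm_num : (0:ℝ) ∈ Set.Ico 0 1)] with t ht
      obtain ⟨ht0, ht1⟩ := ht
      have hmem : ustar + t • v ∈ X := by
        have := hXconv hustar hz (by linarith : (0:ℝ) ≤ 1 - t) ht0.le (by ring)
        have heq : (1 - t) • ustar + t • z = ustar + t • v := by
          rw [hv]; module
        rwa [heq] at this
      have h1 := hmin _ hmem
      have h2 : f (ustar + t • v) ≤ (1 - t) * f ustar + t * f z := by
        have := hf.2 hustar hz (by linarith : (0:ℝ) ≤ 1 - t) ht0.le (by ring)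
        have heq : (1 - t) • ustar + t • z = ustar + t • v := by
          rw [hv]; module
        rwa [heq] at this
      have h3 : ⟪ν' y, ustar + t • v - y⟫ = ⟪ν' y, ustar - y⟫ + t * ⟪ν' y, v⟫ := by
        have : ustar + t • v - y = (ustar - y) + t • v := by abel
        rw [this, inner_add_right, real_inner_smul_right]
      rw [show slope (fun t : ℝ => ν (ustar + t • v)) 0 t
            = (ν (ustar + t • v) - ν ustar) / t by
          simp [slope, ht0.ne', div_eq_inv_mul]
        ]
      rw [h3] at h1
      rw [le_div_iff₀ ht0]
      nlinarith [h1, h2]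
    have hlim := ge_of_tendsto hslope' hev
    have hg : ⟪ν' y - ν' ustar, z - ustar⟫ = ⟪ν' y, v⟫ - ⟪ν' ustar, v⟫ := by
      rw [hv, inner_sub_left]
    linarith [hlim, hg.le, hg.ge]
  · intro u hu
    have h1 : ⟪ν' y - ν' ustar, u - ustar⟫ = ⟪ν' y, u - ustar⟫ - ⟪ν' ustar, u - ustar⟫ :=
      inner_sub_left _ _ _
    have h2 : ⟪ν' y, u - y⟫ = ⟪ν' y, ustar - y⟫ + ⟪ν' y, u - ustar⟫ := by
      rw [← inner_add_right]
      congr 1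
      abel
    linarith
end

section
/- Let 1 < κ ≤ 2 ≤ q and L ≥ 0. Set r = (q - κ)/κ and M = (r/q)^r · L. If f is differentiable on a convex set X ⊆ ℝ^d and satisfies f(x) - f(y) - ⟨∇f(y), x - y⟩ ≤ (L/κ)‖x - y‖^κ for all x, y ∈ X (i.e., f is (L, κ)-weakly smooth), then for every δ > 0 and all x, y ∈ X: f(x) - f(y) - ⟨∇f(y), x - y⟩ ≤ (M/(q δ^r))‖x - y‖^q + L δ. -/
/-- Lemma on inexact gradients: if `f` is `(L, κ)`-weakly smooth on a convex set `X`
(w.r.t. an arbitrary norm), then with `r = (q-κ)/κ` and `M = (r/q)^r L`, for every `δ > 0`,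
`f(x) - f(y) - ⟨∇f(y), x-y⟩ ≤ (M/(q δ^r)) ‖x-y‖^q + L δ`. -/
theorem stmt2 {E : Type*} [NormedAddCommGroup E] [NormedSpace ℝ E]
    (X : Set E) (hX : Convex ℝ X)
    (f : E → ℝ) (f' : E → E →L[ℝ] ℝ)
    (κ q L r M : ℝ)
    (hκ1 : 1 < κ) (hκ2 : κ ≤ 2) (hq : 2 ≤ q) (hL : 0 ≤ L)
    (hr : r = (q - κ) / κ) (hM : M = (r / q) ^ r * L)
    (hdiff : ∀ x ∈ X, HasFDerivAt f (f' x) x)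
    (hsmooth : ∀ x ∈ X, ∀ y ∈ X,
      f x - f y - f' y (x - y) ≤ L / κ * ‖x - y‖ ^ κ)
    (δ : ℝ) (hδ : 0 < δ) (x y : E) (hx : x ∈ X) (hy : y ∈ X) :
    f x - f y - f' y (x - y) ≤ M / (q * δ ^ r) * ‖x - y‖ ^ q + L * δ := by
  have ht : (0:ℝ) ≤ ‖x - y‖ := norm_nonneg _
  have hκ0 : (0:ℝ) < κ := by linarith
  have hq0 : (0:ℝ) < q := by linarith
  have hr0 : 0 ≤ r := by rw [hr]; apply div_nonneg <;> linarith
  set t := ‖x - y‖ with htdef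
  have hkey : L / κ * t ^ κ ≤ M / (q * δ ^ r) * t ^ q + L * δ := by
    rcases hr0.eq_or_lt with h0 | hpos
    · -- r = 0, hence q = κ
      have hqκ : q = κ := by
        have : (q - κ) / κ = 0 := by rw [← hr, ← h0]
        have := (div_eq_zero_iff.mp this).resolve_right hκ0.ne'
        linarith
      have hM' : M = L := by rw [hM, ← h0, Real.rpow_zero, one_mul]
      have hδ0 : δ ^ r = 1 := by rw [← h0, Real.rpow_zero]
      rw [hM', hδ0, hqκ, mul_one]
      have : 0 ≤ L * δ := mul_nonneg hL hδ.le
      linarith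
    · -- 0 < r
      have hκr : κ * r = q - κ := by rw [hr]; field_simp
      have hδr : (0:ℝ) < δ ^ r := Real.rpow_pos_of_pos hδ r
      set c : ℝ := (r / q) / δ with hc
      have hc0 : 0 < c := by positivity
      have hw2 : (0:ℝ) ≤ (q - κ) / q := by
        apply div_nonneg <;> linarith
      have amgm := Real.geom_mean_le_arith_mean2_weighted
        (w₁ := κ / q) (w₂ := (q - κ) / q) (p₁ := c ^ r * t ^ q) (p₂ := c⁻¹)
        (by positivity) hw2 (by positivity) (by positivity) (by field_simp; ring)
      have e1 : (c ^ r) ^ (κ / q) = c ^ ((q - κ) / q) := by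
        rw [← Real.rpow_mul hc0.le]
        congr 1
        field_simp
        linarith [hκr]
      have e2 : (t ^ q) ^ (κ / q) = t ^ κ := by
        rw [← Real.rpow_mul ht]
        congr 1
        field_simp
      have e3 : (c⁻¹) ^ ((q - κ) / q) = (c ^ ((q - κ) / q))⁻¹ :=
        Real.inv_rpow hc0.le _
      have hcw : (0:ℝ) < c ^ ((q - κ) / q) := Real.rpow_pos_of_pos hc0 _
      have hLHS : (c ^ r * t ^ q) ^ (κ / q) * (c⁻¹) ^ ((q - κ) / q) = t ^ κ := by
        rw [Real.mul_rpow (by positivity) (by positivity), e1, e2, e3]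
        field_simp
      rw [hLHS] at amgm
      have e4 : (q - κ) / q * c⁻¹ = κ * δ := by
        rw [hc]
        have hrne : r ≠ 0 := hpos.ne'
        field_simp
        linear_combination -hκr
      have hkey2 : t ^ κ ≤ κ / q * (c ^ r * t ^ q) + κ * δ := by
        rw [← e4]; exact amgm
      have hcr : c ^ r = (r / q) ^ r / δ ^ r :=
        Real.div_rpow (by positivity) hδ.le r
      have h1 : L / κ * t ^ κ ≤ L / κ * (κ / q * (c ^ r * t ^ q) + κ * δ) :=
        mul_le_mul_of_nonneg_left hkey2 (by positivity)
      have h2 : L / κ * (κ / q * (c ^ r * t ^ q) + κ * δ)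
          = M / (q * δ ^ r) * t ^ q + L * δ := by
        rw [hcr, hM]
        field_simp
      linarith [h1, h2.le, h2.ge]
  calc f x - f y - f' y (x - y) ≤ L / κ * t ^ κ := hsmooth x hx y hy
    _ ≤ M / (q * δ ^ r) * t ^ q + L * δ := hkey
end

section
/- Convexity combination step in the accelerated method: if F is (L,κ)-weakly smooth and H convex, and x_{t}^{md} = (A_{t-1}/A_t) x_t^{ag} + (α_t/A_t) x_t, x_{t+1}^{ag} = (A_{t-1}/A_t) x_t^{ag} + (α_t/A_t) x_{t+1} with A_t = A_{t-1} + α_t, then for every δ_t > 0: Ψ(x_{t+1}^{ag}) ≤ (A_{t-1}/A_t) Ψ(x_t^{ag}) + (α_t/A_t) l_Ψ(x_{t+1}, x_t^{md}) + (M/(qδ_t^r))(α_t/A_t)^q ‖x_{t+1} − x_t‖^q + L δ_t, where l_Ψ(x, y) = F(y) + ⟨∇F(y), x − y⟩ + H(x), Ψ = F + H, r = (q−κ)/κ, M = (r/q)^r L. -/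
open Set

/-- First-order condition for convexity in a normed space. -/
lemma aux_grad_ineq {E : Type*} [NormedAddCommGroup E] [NormedSpace ℝ E]
    {X : Set E} {F : E → ℝ} {F' : E →L[ℝ] ℝ} (hF : ConvexOn ℝ X F)
    {x y : E} (hx : x ∈ X) (hy : y ∈ X) (hd : HasFDerivAt F F' x) :
    F x + F' (y - x) ≤ F y := by
  set g : ℝ → ℝ := fun t => F (x + t • (y - x)) with hg
  have hgconv : ConvexOn ℝ (Icc (0:ℝ) 1) g := by
    have hA : ConvexOn ℝ ((AffineMap.lineMap x y : ℝ →ᵃ[ℝ] E) ⁻¹' X)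
        (F ∘ (AffineMap.lineMap x y : ℝ →ᵃ[ℝ] E)) := hF.comp_affineMap _
    have hsub : Icc (0:ℝ) 1 ⊆ (AffineMap.lineMap x y : ℝ →ᵃ[ℝ] E) ⁻¹' X := by
      intro t ht
      rw [mem_preimage, AffineMap.lineMap_apply_module]
      have h2 := (hF.1 : Convex ℝ X) hx hy (by linarith [ht.2] : (0:ℝ) ≤ 1 - t) ht.1
        (by ring : (1 - t) + t = 1)
      exact h2
    have h3 := hA.subset hsub (convex_Icc 0 1)
    have he : g = F ∘ (AffineMap.lineMap x y : ℝ →ᵃ[ℝ] E) := by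
      funext t
      show F (x + t • (y - x)) = F (AffineMap.lineMap x y t)
      congr 1
      rw [AffineMap.lineMap_apply_module]
      module
    rw [he]; exact h3
  have hgd : HasDerivAt g (F' (y - x)) 0 := by
    have hline : HasDerivAt (fun t : ℝ => x + t • (y - x)) (y - x) 0 := by
      simpa using ((hasDerivAt_id (0:ℝ)).smul_const (y - x)).const_add x
    have hd0 : HasFDerivAt F F' (x + (0:ℝ) • (y - x)) := by simpa using hd
    have := hd0.comp_hasDerivAt 0 hline
    exact this
  have hslope := hgconv.le_slope_of_hasDerivAt (by norm_num) (by norm_num)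
    (by norm_num : (0:ℝ) < 1) hgd
  have hsl : slope g 0 1 = F y - F x := by
    simp [slope_def_field, hg]
  rw [hsl] at hslope
  linarith

/-- Weighted Young-type inequality. -/
lemma aux_young {κ q L r M δ a : ℝ} (hκ1 : 1 < κ) (hκq : κ ≤ q) (hL : 0 ≤ L)
    (hr : r = (q - κ) / κ) (hM : M = (r / q) ^ r * L) (hδ : 0 < δ) (ha : 0 ≤ a) :
    L / κ * a ^ κ ≤ M / (q * δ ^ r) * a ^ q + L * δ := by
  have hκ0 : (0:ℝ) < κ := by linarith
  have hq0 : (0:ℝ) < q := by linarith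
  have hr0 : 0 ≤ r := by rw [hr]; exact div_nonneg (by linarith) hκ0.le
  rcases eq_or_lt_of_le hr0 with hre | hrpos
  · -- r = 0, so q = κ
    have hqκ : q = κ := by
      have h0 : q - κ = 0 := by
        by_contra h
        exact (div_ne_zero h (ne_of_gt hκ0)) (hr ▸ hre.symm)
      linarith
    subst hqκ
    rw [← hre] at hM ⊢
    simp only [Real.rpow_zero, one_mul, mul_one] at hM ⊢
    rw [hM]
    nlinarith [mul_nonneg hL hδ.le]
  · rcases eq_or_lt_of_le ha with ha0 | hapos
    · rw [← ha0, Real.zero_rpow (ne_of_gt hκ0), Real.zero_rpow (ne_of_gt hq0)]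
      have hM0 : 0 ≤ M / (q * δ ^ r) := by
        apply div_nonneg
        · rw [hM]; positivity
        · positivity
      nlinarith [mul_nonneg hL hδ.le]
    · set w₁ := κ / q with hw₁
      set w₂ := (q - κ) / q with hw₂
      set p₁ := (r / q) ^ r * a ^ q / δ ^ r with hp₁
      set p₂ := q / r * δ with hp₂
      have hp₁pos : 0 < p₁ := by rw [hp₁]; positivity
      have hp₂pos : 0 < p₂ := by rw [hp₂]; positivity
      have hw : w₁ + w₂ = 1 := by rw [hw₁, hw₂]; field_simp; ring
      have hAM := Real.geom_mean_le_arith_mean2_weighted (by positivity)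
        (by rw [hw₂]; exact div_nonneg (by linarith) hq0.le) hp₁pos.le hp₂pos.le hw
      have hrκ : r * κ = q - κ := by rw [hr]; field_simp
      have hkey : p₁ ^ w₁ * p₂ ^ w₂ = a ^ κ := by
        rw [Real.rpow_def_of_pos hp₁pos, Real.rpow_def_of_pos hp₂pos,
          Real.rpow_def_of_pos hapos, ← Real.exp_add]
        congr 1
        have hlp₁ : Real.log p₁ =
            r * (Real.log r - Real.log q) + q * Real.log a - r * Real.log δ := by
          rw [hp₁, Real.log_div (by positivity) (by positivity),
            Real.log_mul (by positivity) (by positivity),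
            Real.log_rpow (by positivity), Real.log_rpow hapos, Real.log_rpow hδ,
            Real.log_div (ne_of_gt hrpos) (ne_of_gt hq0)]
        have hlp₂ : Real.log p₂ = Real.log q - Real.log r + Real.log δ := by
          rw [hp₂, Real.log_mul (by positivity) (ne_of_gt hδ),
            Real.log_div (ne_of_gt hq0) (ne_of_gt hrpos)]
        rw [hlp₁, hlp₂, hw₁, hw₂]
        field_simp
        linear_combination (Real.log r - Real.log q - Real.log δ) * hrκ
      rw [hkey] at hAM
      have hstep : L / κ * a ^ κ ≤ L / κ * (w₁ * p₁ + w₂ * p₂) := by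
        apply mul_le_mul_of_nonneg_left hAM (by positivity)
      refine hstep.trans (le_of_eq ?_)
      have h1st : L / κ * (w₁ * p₁) = M / (q * δ ^ r) * a ^ q := by
        rw [hM, hp₁, hw₁]
        have hδr : δ ^ r ≠ 0 := by positivity
        field_simp
      have h2nd : L / κ * (w₂ * p₂) = L * δ := by
        rw [hp₂, hw₂]
        field_simp
        linear_combination -L * hrκ
      rw [mul_add, h1st, h2nd]


/-- Convexity combination step in the accelerated method: with
`x_t^{md} = (A_{t-1}/A_t)x_t^{ag} + (α_t/A_t)x_t` and
`x_{t+1}^{ag} = (A_{t-1}/A_t)x_t^{ag} + (α_t/A_t)x_{t+1}`, `A_t = A_{t-1} + α_t`, for every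
`δ_t > 0`: `Ψ(x_{t+1}^{ag}) ≤ (A_{t-1}/A_t)Ψ(x_t^{ag}) + (α_t/A_t)l_Ψ(x_{t+1}, x_t^{md})
+ (M/(qδ_t^r))(α_t/A_t)^q ‖x_{t+1} - x_t‖^q + Lδ_t`. -/
theorem stmt13 {E : Type*} [NormedAddCommGroup E] [NormedSpace ℝ E]
    (X : Set E) (hXconv : Convex ℝ X)
    (F H : E → ℝ) (F' : E → E →L[ℝ] ℝ)
    (κ q L r M : ℝ)
    (hκ1 : 1 < κ) (hκ2 : κ ≤ 2) (hq : 2 ≤ q) (hL : 0 ≤ L)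
    (hr : r = (q - κ) / κ) (hM : M = (r / q) ^ r * L)
    (hFconv : ConvexOn ℝ X F) (hHconv : ConvexOn ℝ X H)
    (hFdiff : ∀ x ∈ X, HasFDerivAt F (F' x) x)
    (hFsmooth : ∀ x ∈ X, ∀ y ∈ X,
      F x - F y - F' y (x - y) ≤ L / κ * ‖x - y‖ ^ κ)
    (αt Aprev At : ℝ) (hαt : 0 < αt) (hAprev : 0 ≤ Aprev) (hAt : At = Aprev + αt)
    (xag xt xt1 xmd xag1 : E)
    (hxag : xag ∈ X) (hxt : xt ∈ X) (hxt1 : xt1 ∈ X)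
    (hxmd : xmd = (Aprev / At) • xag + (αt / At) • xt)
    (hxag1 : xag1 = (Aprev / At) • xag + (αt / At) • xt1)
    (δt : ℝ) (hδt : 0 < δt) :
    F xag1 + H xag1
      ≤ (Aprev / At) * (F xag + H xag)
        + (αt / At) * (F xmd + F' xmd (xt1 - xmd) + H xt1)
        + M / (q * δt ^ r) * (αt / At) ^ q * ‖xt1 - xt‖ ^ q
        + L * δt := by
  have hAtpos : 0 < At := by rw [hAt]; linarith
  set σ := Aprev / At with hσdef
  set τ := αt / At with hτdef
  have hσ : 0 ≤ σ := div_nonneg hAprev hAtpos.le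
  have hτ : 0 < τ := div_pos hαt hAtpos
  have hστ : σ + τ = 1 := by
    rw [hσdef, hτdef, ← add_div, hAt, div_self (by linarith : Aprev + αt ≠ 0)]
  have hxmdX : xmd ∈ X := hxmd ▸ hXconv hxag hxt hσ hτ.le hστ
  have hxag1X : xag1 ∈ X := hxag1 ▸ hXconv hxag hxt1 hσ hτ.le hστ
  -- smoothness at xmd
  have h1 : F xag1 ≤ F xmd + F' xmd (xag1 - xmd) + L / κ * ‖xag1 - xmd‖ ^ κ := by
    have := hFsmooth xag1 hxag1X xmd hxmdX
    linarith
  -- first-order convexity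
  have h2 : F xmd + F' xmd (xag - xmd) ≤ F xag :=
    aux_grad_ineq hFconv hxmdX hxag (hFdiff xmd hxmdX)
  -- difference identity
  have h3 : xag1 - xmd = τ • (xt1 - xt) := by rw [hxag1, hxmd]; module
  -- split of the linear term
  have h4 : F' xmd (xag1 - xmd) = σ * F' xmd (xag - xmd) + τ * F' xmd (xt1 - xmd) := by
    have hsplit : xag1 - xmd = σ • (xag - xmd) + τ • (xt1 - xmd) := by
      have : σ • (xag - xmd) + τ • (xt1 - xmd)
          = σ • xag + τ • xt1 - (σ + τ) • xmd := by module
      rw [this, hστ, one_smul, hxag1]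
    rw [hsplit, map_add, ContinuousLinearMap.map_smul, ContinuousLinearMap.map_smul,
      smul_eq_mul, smul_eq_mul]
  -- norm identity
  have h5 : ‖xag1 - xmd‖ = τ * ‖xt1 - xt‖ := by
    rw [h3, norm_smul, Real.norm_eq_abs, abs_of_pos hτ]
  -- convexity of H
  have h6 : H xag1 ≤ σ * H xag + τ * H xt1 :=
    hxag1 ▸ hHconv.2 hxag hxt1 hσ hτ.le hστ
  -- Young inequality
  have h7 : L / κ * ‖xag1 - xmd‖ ^ κ
      ≤ M / (q * δt ^ r) * τ ^ q * ‖xt1 - xt‖ ^ q + L * δt := by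
    have hy := aux_young hκ1 (by linarith : κ ≤ q) hL hr hM hδt
      (norm_nonneg (xag1 - xmd))
    have hq' : ‖xag1 - xmd‖ ^ q = τ ^ q * ‖xt1 - xt‖ ^ q := by
      rw [h5, Real.mul_rpow hτ.le (norm_nonneg _)]
    rw [hq'] at hy
    linarith [hy]
  have h2' : σ * (F xmd + F' xmd (xag - xmd)) ≤ σ * F xag :=
    mul_le_mul_of_nonneg_left h2 hσ
  have hFx : F xmd = σ * F xmd + τ * F xmd := by
    rw [← add_mul, hστ, one_mul]
  nlinarith [h1, h4, h6, h7, h2', hFx]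
end
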